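/- Let 1 ≤ d ≤ p and Y ∈ ℝ^{d×p} be a full-rank matrix with singular values σ_1(Y) ≥ ... ≥ σ_d(Y) > 0. For each j, let v_j be the span of all rows of Y except the j-th, and let d_j be the Euclidean distance from the j-th row y_j to the subspace v_j. Then ∑_{j=1}^d σ_j(Y)^{-2} = ∑_{j=1}^d ⟨(YY*)^{-1} e_j, e_j⟩ = ∑_{j=1}^d d_j^{-2}. -/

import Mathlib

open Matrix Polynomial

lemma coeff_one_prod {ι : Type*} [DecidableEq ι] (s : Finset ι) (c : ι → ℝ) :
    (∏ j ∈ s, (1 + C (c j) * X)).coeff 1 = ∑ j ∈ s, c j := by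
  induction s using Finset.cons_induction with
  | empty => simp [coeff_one]
  | cons a s ha ih =>
    rw [Finset.prod_cons, Finset.sum_cons, add_mul, one_mul]
    have h0 : (∏ j ∈ s, (1 + C (c j) * X)).coeff 0 = 1 := by
      rw [coeff_zero_eq_eval_zero]; simp [eval_prod]
    rw [coeff_add, ih]
    have : (C (c a) * X * ∏ j ∈ s, (1 + C (c j) * X)).coeff 1 = c a := by
      rw [mul_assoc, coeff_C_mul, coeff_X_mul, h0, mul_one]
    rw [this, add_comm]

lemma neg_one_prod {ι : Type*} (s : Finset ι) (f : ι → ℝ[X]) :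
    (∏ j ∈ s, -f j) = (-1) ^ s.card * ∏ j ∈ s, f j := by
  rw [Finset.prod_congr rfl (fun j _ => (by ring : -f j = -1 * f j)),
    Finset.prod_mul_distrib, Finset.prod_const]

lemma sum_inv_eq_trace_inv
    (d : ℕ) (A : Matrix (Fin d) (Fin d) ℝ)
    (σ2 : Fin d → ℝ) (hσpos : ∀ j, 0 < σ2 j)
    (hσ : A.charpoly = ∏ j : Fin d, (X - C (σ2 j))) :
    (∑ j : Fin d, (σ2 j)⁻¹) = ∑ j : Fin d, A⁻¹ j j := by
  classical
  have hdetA : A.det = ∏ j, σ2 j := by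
    rw [Matrix.det_eq_sign_charpoly_coeff, coeff_zero_eq_eval_zero, hσ]
    simp only [eval_prod, eval_sub, eval_X, eval_C, zero_sub, Fintype.card_fin]
    rw [Finset.prod_congr rfl (fun j (_ : j ∈ Finset.univ) => (by ring : -σ2 j = -1 * σ2 j)),
      Finset.prod_mul_distrib, Finset.prod_const, Finset.card_univ, Fintype.card_fin,
      ← mul_assoc, ← mul_pow, neg_mul_neg, one_mul, one_pow, one_mul]
  have hdetpos : 0 < A.det := hdetA ▸ Finset.prod_pos fun j _ => hσpos j
  have hunit : IsUnit A.det := Ne.isUnit hdetpos.ne'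
  set B := A⁻¹ with hB
  have hBA : B * A = 1 := Matrix.nonsing_inv_mul A hunit
  set M₀ : Matrix (Fin d) (Fin d) ℝ[X] := (X : ℝ[X]) • (1 : Matrix (Fin d) (Fin d) ℝ[X]) + A.map C with hM₀
  -- step 2
  have hψ : det M₀ = ∏ j : Fin d, ((X : ℝ[X]) + C (σ2 j)) := by
    set ψ : ℝ[X] →+* ℝ[X] := (aeval (R := ℝ) (-X : ℝ[X])).toRingHom with hψdef
    have hmap : (charmatrix A).map ψ = -M₀ := by
      refine Matrix.ext fun i k => ?_
      by_cases h : i = k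
      · subst h
        simp only [Matrix.map_apply, charmatrix_apply, Matrix.diagonal_apply_eq, hψdef,
          AlgHom.toRingHom_eq_coe, RingHom.coe_coe, map_sub, aeval_X, aeval_C, algebraMap_eq,
          Matrix.neg_apply, hM₀, Matrix.add_apply, Matrix.smul_apply, Matrix.one_apply_eq,
          smul_eq_mul, mul_one]
        ring
      · simp only [Matrix.map_apply, charmatrix_apply, Matrix.diagonal_apply_ne _ h, hψdef,
          AlgHom.toRingHom_eq_coe, RingHom.coe_coe, map_sub, map_zero, aeval_C, algebraMap_eq,
          Matrix.neg_apply, hM₀, Matrix.add_apply, Matrix.smul_apply, Matrix.one_apply_ne h,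
          smul_eq_mul, mul_zero, zero_sub, zero_add, map_neg]
    have h1 : ψ A.charpoly = ((charmatrix A).map ψ).det := RingHom.map_det ψ (charmatrix A)
    rw [hσ, map_prod, hmap, Matrix.det_neg] at h1
    simp only [hψdef, AlgHom.toRingHom_eq_coe, RingHom.coe_coe, map_sub, aeval_X, aeval_C,
      algebraMap_eq, Fintype.card_fin] at h1
    rw [Finset.prod_congr rfl (fun j (_ : j ∈ Finset.univ) =>
        (by ring : -X - C (σ2 j) = -((X:ℝ[X]) + C (σ2 j)))), neg_one_prod,
      Finset.card_univ, Fintype.card_fin] at h1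
    exact mul_left_cancel₀ (pow_ne_zero d (by norm_num : (-1:ℝ[X]) ≠ 0)) h1.symm
  -- step 1
  have hstep1 : det (1 + (X : ℝ[X]) • B.map C) * C A.det = det M₀ := by
    have hh : (C A.det : ℝ[X]) = (A.map C).det := RingHom.map_det C A
    rw [hh, ← Matrix.det_mul, add_mul, one_mul, Matrix.smul_mul, ← Matrix.map_mul, hBA,
      Matrix.map_one C C.map_zero C.map_one, hM₀, add_comm]
  -- step 3
  have hstep3 : (∏ j : Fin d, ((X : ℝ[X]) + C (σ2 j)))
      = (∏ j : Fin d, (1 + C ((σ2 j)⁻¹) * X)) * C A.det := by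
    rw [hdetA, map_prod, ← Finset.prod_mul_distrib]
    refine Finset.prod_congr rfl fun j _ => ?_
    have h := (hσpos j).ne'
    rw [add_mul, one_mul, mul_assoc, mul_comm (X : ℝ[X]), ← mul_assoc, ← C_mul,
      inv_mul_cancel₀ h, C_1, one_mul, add_comm]
  have hCdet : (C A.det : ℝ[X]) ≠ 0 := by
    simpa using hdetpos.ne'
  have hkey : det (1 + (X : ℝ[X]) • B.map C) = ∏ j : Fin d, (1 + C ((σ2 j)⁻¹) * X) :=
    mul_right_cancel₀ hCdet (by rw [hstep1, hψ, hstep3])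
  have htr := Matrix.coeff_det_one_add_X_smul_one B
  rw [hkey, coeff_one_prod] at htr
  rw [htr]
  simp [Matrix.trace, Matrix.diag]

lemma diag_inv_eq_dist (d p : ℕ)
    (Y : Matrix (Fin d) (Fin p) ℝ)
    (hunit : IsUnit (Y * Yᵀ).det) (j : Fin d) :
    (Y * Yᵀ)⁻¹ j j = ((Metric.infDist
      ((EuclideanSpace.equiv (Fin p) ℝ).symm (Y j))
      (Submodule.span ℝ ((fun k : Fin d => (EuclideanSpace.equiv (Fin p) ℝ).symm (Y k)) ''
        {k | k ≠ j}) : Set (EuclideanSpace ℝ (Fin p)))) ^ 2)⁻¹ := by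
  classical
  set A := Y * Yᵀ with hA
  set B := A⁻¹ with hB
  have hBA : B * A = 1 := Matrix.nonsing_inv_mul A hunit
  set c := B j j with hc
  set L := (EuclideanSpace.equiv (Fin p) ℝ).symm with hL
  set z : Fin p → ℝ := fun m => ∑ k, B j k * Y k m with hz
  set V := Submodule.span ℝ ((fun k : Fin d => L (Y k)) '' {k | k ≠ j}) with hV
  have hLapp : ∀ (x : Fin p → ℝ) (m : Fin p), (L x) m = x m := fun _ _ => rfl
  have hinnerL : ∀ x y : Fin p → ℝ, (inner ℝ (L x) (L y) : ℝ) = ∑ m, x m * y m := by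
    intro x y
    rw [PiLp.inner_apply]
    simp [hLapp, RCLike.inner_apply, mul_comm]
  -- key inner products
  have hinner : ∀ i : Fin d, ∑ m, Y i m * z m = (1 : Matrix (Fin d) (Fin d) ℝ) i j := by
    intro i
    have h1 : ∑ m, Y i m * z m = ∑ k, B j k * A k i := by
      simp only [hz, Finset.mul_sum, hA, Matrix.mul_apply, Matrix.transpose_apply]
      rw [Finset.sum_comm]
      exact Finset.sum_congr rfl fun k _ =>
        Finset.sum_congr rfl fun m _ => by ring
    rw [h1, ← Matrix.mul_apply, hBA, Matrix.one_apply, Matrix.one_apply]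
    simp [eq_comm]
  have hZZ : ∑ m, z m * z m = c := by
    have h1 : ∑ m, z m * z m = ∑ m, ∑ k, B j k * (Y k m * z m) := by
      refine Finset.sum_congr rfl fun m _ => ?_
      calc z m * z m = (∑ k, B j k * Y k m) * z m := rfl
        _ = ∑ k, B j k * (Y k m * z m) := by
            rw [Finset.sum_mul]
            exact Finset.sum_congr rfl fun k _ => by ring
    rw [h1, Finset.sum_comm]
    simp only [← Finset.mul_sum, hinner]
    simp [Matrix.one_apply, hc]
  have hZj : ∑ m, Y j m * z m = 1 := by rw [hinner j, Matrix.one_apply_eq]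
  -- c > 0
  have hcnn : (0:ℝ) ≤ c := by
    rw [← hZZ]; exact Finset.sum_nonneg fun m _ => mul_self_nonneg _
  have hcne : c ≠ 0 := by
    intro h0
    have hz0 : ∀ m, z m = 0 := by
      intro m
      have h2 := hZZ
      rw [h0] at h2
      exact mul_self_eq_zero.mp
        ((Finset.sum_eq_zero_iff_of_nonneg (fun m _ => mul_self_nonneg (z m))).mp h2 m
          (Finset.mem_univ m))
    rw [Finset.sum_eq_zero (fun m _ => by rw [hz0 m, mul_zero])] at hZj
    exact one_ne_zero hZj.symm
  have hcpos : 0 < c := lt_of_le_of_ne hcnn (Ne.symm hcne)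
  -- the approximating point
  set u : EuclideanSpace ℝ (Fin p) :=
    ∑ k ∈ Finset.univ.erase j, (-(c⁻¹ * B j k)) • L (Y k) with hu
  have huV : u ∈ V := by
    refine Submodule.sum_mem _ fun k hk => Submodule.smul_mem _ _ ?_
    exact Submodule.subset_span ⟨k, Finset.ne_of_mem_erase hk, rfl⟩
  have hfun : Y j + (∑ k ∈ Finset.univ.erase j, (c⁻¹ * B j k) • Y k) = c⁻¹ • z := by
    funext m
    simp only [Pi.add_apply, Finset.sum_apply, Pi.smul_apply, smul_eq_mul, hz, Finset.mul_sum]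
    rw [← Finset.sum_erase_add _ _ (Finset.mem_univ j)]
    have hj : c⁻¹ * (B j j * Y j m) = Y j m := by
      rw [← hc, ← mul_assoc, inv_mul_cancel₀ hcne, one_mul]
    rw [hj, add_comm]
    congr 1
    exact Finset.sum_congr rfl fun k _ => by ring
  have hdiff : L (Y j) - u = c⁻¹ • L z := by
    have h1 : L (Y j) - u = L (Y j) + ∑ k ∈ Finset.univ.erase j, (c⁻¹ * B j k) • L (Y k) := by
      rw [hu, sub_eq_add_neg, ← Finset.sum_neg_distrib]
      congr 1
      exact Finset.sum_congr rfl fun k _ => by rw [neg_smul, neg_neg]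
    have h2 : (∑ k ∈ Finset.univ.erase j, (c⁻¹ * B j k) • L (Y k))
        = L (∑ k ∈ Finset.univ.erase j, (c⁻¹ * B j k) • Y k) := by
      rw [map_sum]
      exact Finset.sum_congr rfl fun k _ => (L.map_smul _ _).symm
    rw [h1, h2, ← map_add, hfun, L.map_smul]
  -- norms
  have hnormZ : ‖L z‖ = Real.sqrt c := by
    have h1 : (inner ℝ (L z) (L z) : ℝ) = c := by rw [hinnerL]; exact hZZ
    have h2 : ‖L z‖ ^ 2 = c := by rw [← real_inner_self_eq_norm_sq]; exact h1
    rw [← h2, Real.sqrt_sq (norm_nonneg _)]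
  have hsqpos : 0 < Real.sqrt c := Real.sqrt_pos.mpr hcpos
  have horth : ∀ v ∈ V, (inner ℝ (L z) v : ℝ) = 0 := by
    have hsub : ((fun k : Fin d => L (Y k)) '' {k | k ≠ j})
        ⊆ (LinearMap.ker ((innerSL ℝ (L z) : EuclideanSpace ℝ (Fin p) →L[ℝ] ℝ) : EuclideanSpace ℝ (Fin p) →ₗ[ℝ] ℝ) : Set (EuclideanSpace ℝ (Fin p))) := by
      rintro x ⟨k, hk, rfl⟩
      have h3 : (inner ℝ (L z) (L (Y k)) : ℝ) = 0 := by
        rw [hinnerL]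
        have h4 := hinner k
        rw [Matrix.one_apply_ne hk] at h4
        rw [← h4]
        exact Finset.sum_congr rfl fun m _ => by ring
      simpa [LinearMap.mem_ker] using h3
    intro v hv
    have := (Submodule.span_le.mpr hsub) hv
    simpa [LinearMap.mem_ker] using this
  -- infDist
  have hval : c⁻¹ * Real.sqrt c = Real.sqrt c⁻¹ := by
    apply mul_right_cancel₀ hsqpos.ne'
    rw [mul_assoc, Real.mul_self_sqrt hcnn, inv_mul_cancel₀ hcne, Real.sqrt_inv,
      inv_mul_cancel₀ hsqpos.ne']
  have hne : (V : Set (EuclideanSpace ℝ (Fin p))).Nonempty := ⟨0, Submodule.zero_mem V⟩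
  have hinfdist : Metric.infDist (L (Y j)) (V : Set (EuclideanSpace ℝ (Fin p)))
      = Real.sqrt c⁻¹ := by
    apply le_antisymm
    · have h5 := Metric.infDist_le_dist_of_mem (x := L (Y j)) huV
      have h6 : dist (L (Y j)) u = Real.sqrt c⁻¹ := by
        rw [dist_eq_norm, hdiff, norm_smul, hnormZ]
        simp only [norm_inv, Real.norm_eq_abs, abs_of_pos hcpos]
        exact hval
      rwa [h6] at h5
    · by_contra hlt
      push_neg at hlt
      obtain ⟨v, hvV, hvd⟩ := (Metric.infDist_lt_iff hne).mp hlt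
      have h1 : (inner ℝ (L (Y j) - v) (L z) : ℝ) = 1 := by
        rw [inner_sub_left, real_inner_comm (L z) v, horth v hvV, sub_zero, hinnerL, hZj]
      have h2 : (1:ℝ) ≤ dist (L (Y j)) v * Real.sqrt c := by
        have h7 := real_inner_le_norm (L (Y j) - v) (L z)
        rw [h1, hnormZ] at h7
        rw [dist_eq_norm]
        exact h7
      have h3 : dist (L (Y j)) v * Real.sqrt c < Real.sqrt c⁻¹ * Real.sqrt c :=
        mul_lt_mul_of_pos_right hvd hsqpos
      rw [Real.sqrt_inv, inv_mul_cancel₀ hsqpos.ne'] at h3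
      linarith
  rw [hinfdist, Real.sq_sqrt (inv_nonneg.mpr hcnn), inv_inv]

/-- Negative second moment identity: for a full-rank `d × p` real matrix `Y` (`1 ≤ d ≤ p`)
with singular values `σ 0 ≥ σ 1 ≥ ... ≥ σ (d-1) > 0` (so that `(σ j)^2` are the eigenvalues
of `Y Yᵀ`, encoded via the characteristic polynomial), and `v j` the span of the rows of `Y`
other than the `j`-th, we have
`∑ j σ j ^ (-2) = ∑ j ⟨(Y Yᵀ)⁻¹ e j, e j⟩ = ∑ j d(y j, v j) ^ (-2)`. -/
theorem negative_second_moment_identity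
    (d p : ℕ) (hd : 1 ≤ d) (hdp : d ≤ p)
    (Y : Matrix (Fin d) (Fin p) ℝ) (hrank : Y.rank = d)
    (σ : Fin d → ℝ) (hσpos : ∀ j, 0 < σ j) (hσmono : Antitone σ)
    (hσ : (Y * Yᵀ).charpoly = ∏ j : Fin d, (X - C ((σ j) ^ 2)))
    (dist : Fin d → ℝ)
    (hdist : ∀ j, dist j = Metric.infDist
      ((EuclideanSpace.equiv (Fin p) ℝ).symm (Y j))
      (Submodule.span ℝ ((fun k : Fin d => (EuclideanSpace.equiv (Fin p) ℝ).symm (Y k)) ''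
        {k | k ≠ j}) : Set (EuclideanSpace ℝ (Fin p)))) :
    (∑ j : Fin d, ((σ j) ^ 2)⁻¹) = ∑ j : Fin d, (Y * Yᵀ)⁻¹ j j ∧
    (∑ j : Fin d, (Y * Yᵀ)⁻¹ j j) = ∑ j : Fin d, ((dist j) ^ 2)⁻¹ := by
  classical
  have hσ2pos : ∀ j : Fin d, 0 < σ j ^ 2 := fun j => pow_pos (hσpos j) 2
  have hdetA : (Y * Yᵀ).det = ∏ j, σ j ^ 2 := by
    rw [Matrix.det_eq_sign_charpoly_coeff, coeff_zero_eq_eval_zero, hσ]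
    simp only [eval_prod, eval_sub, eval_X, eval_C, zero_sub, Fintype.card_fin]
    rw [Finset.prod_congr rfl (fun j (_ : j ∈ Finset.univ) =>
        (by ring : -(σ j ^ 2) = -1 * σ j ^ 2)),
      Finset.prod_mul_distrib, Finset.prod_const, Finset.card_univ, Fintype.card_fin,
      ← mul_assoc, ← mul_pow, neg_mul_neg, one_mul, one_pow, one_mul]
  have hdetpos : 0 < (Y * Yᵀ).det := hdetA ▸ Finset.prod_pos fun j _ => hσ2pos j
  have hunit : IsUnit (Y * Yᵀ).det := Ne.isUnit hdetpos.ne'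
  constructor
  · exact sum_inv_eq_trace_inv d (Y * Yᵀ) (fun j => σ j ^ 2) hσ2pos hσ
  · refine Finset.sum_congr rfl fun j _ => ?_
    rw [hdist j]
    exact diag_inv_eq_dist d p Y hunit j
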